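/- arXiv:2104.05037 — 2 statements merged into one kernel-verified Lean document; each statement's English description precedes it below -/
import Mathlib

section
/- Let n ≥ 1, K > 0, and define μ(a, f) = K·a·(a² - f²)^((n-1)/2) for a ≥ f ≥ 0 (real power). Let a_IS, f_IS, a_s, f_s, a_t, f_t ≥ 0 satisfy a_s ≥ f_s, a_t ≥ f_t, a_s + a_t = a_IS, and f_s + f_t ≥ f_IS with a_IS ≥ f_IS. Then μ(a_s, f_s) + μ(a_t, f_t) ≤ μ(a_IS, f_IS). -/
theorem measure_sum_le (n : ℕ) (hn : 1 ≤ n) (K : ℝ) (hK : 0 < K)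
    (aIS fIS as fs at_ ft : ℝ)
    (haIS : 0 ≤ aIS) (hfIS : 0 ≤ fIS) (has : 0 ≤ as) (hfs : 0 ≤ fs)
    (hat : 0 ≤ at_) (hft : 0 ≤ ft)
    (h1 : fs ≤ as) (h2 : ft ≤ at_) (h3 : as + at_ = aIS)
    (h4 : fIS ≤ fs + ft) (h5 : fIS ≤ aIS) :
    K * as * ((as ^ 2 - fs ^ 2) ^ (((n : ℝ) - 1) / 2)) +
      K * at_ * ((at_ ^ 2 - ft ^ 2) ^ (((n : ℝ) - 1) / 2)) ≤
      K * aIS * ((aIS ^ 2 - fIS ^ 2) ^ (((n : ℝ) - 1) / 2)) := by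
  set p : ℝ := ((n : ℝ) - 1) / 2 with hp
  have hp0 : 0 ≤ p := by
    have : (1 : ℝ) ≤ n := by exact_mod_cast hn
    simp only [hp]; linarith
  have hs0 : 0 ≤ as ^ 2 - fs ^ 2 := by nlinarith
  have ht0 : 0 ≤ at_ ^ 2 - ft ^ 2 := by nlinarith
  have hfIS2 : fIS ^ 2 ≤ (fs + ft) ^ 2 := by nlinarith
  have hs1 : as ^ 2 - fs ^ 2 ≤ aIS ^ 2 - fIS ^ 2 := by nlinarith
  have ht1 : at_ ^ 2 - ft ^ 2 ≤ aIS ^ 2 - fIS ^ 2 := by nlinarith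
  have hrs := Real.rpow_le_rpow hs0 hs1 hp0
  have hrt := Real.rpow_le_rpow ht0 ht1 hp0
  have hX0 : 0 ≤ (aIS ^ 2 - fIS ^ 2) ^ p := Real.rpow_nonneg (by nlinarith) p
  have e1 : K * as * ((as ^ 2 - fs ^ 2) ^ p) ≤ K * as * ((aIS ^ 2 - fIS ^ 2) ^ p) :=
    mul_le_mul_of_nonneg_left hrs (by positivity)
  have e2 : K * at_ * ((at_ ^ 2 - ft ^ 2) ^ p) ≤ K * at_ * ((aIS ^ 2 - fIS ^ 2) ^ p) :=
    mul_le_mul_of_nonneg_left hrt (by positivity)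
  have e3 : K * as * ((aIS ^ 2 - fIS ^ 2) ^ p) + K * at_ * ((aIS ^ 2 - fIS ^ 2) ^ p)
      = K * aIS * ((aIS ^ 2 - fIS ^ 2) ^ p) := by rw [← h3]; ring
  linarith
end

section
/- Let x_s, x_t, b ∈ ℝⁿ (n ≥ 1), c > ‖x_s - x_t‖, and g with ‖x_s - b‖ < g and g + ‖b - x_t‖ < c. Then λ(E(x_s, b, g)) + λ(E(b, x_t, c − g)) ≤ λ(E(x_s, x_t, c)), where λ denotes Lebesgue measure on ℝⁿ and E(p, q, a) = {x | ‖p − x‖ + ‖x − q‖ ≤ a}, given that the Lebesgue measure of E(p, q, a) equals K·a·(a² − ‖p − q‖²)^((n−1)/2) with K = π^(n/2)/(2ⁿ Γ(n/2 + 1)). -/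
set_option maxHeartbeats 1000000


open MeasureTheory Real

def PHS {n : ℕ} (p q : EuclideanSpace ℝ (Fin n)) (a : ℝ) : Set (EuclideanSpace ℝ (Fin n)) :=
  {x | dist p x + dist x q ≤ a}

theorem local_subsets_measure_le_informed {n : ℕ} (hn : 1 ≤ n)
    (xs xt b : EuclideanSpace ℝ (Fin n)) (c g : ℝ)
    (hc : dist xs xt < c) (hg : dist xs b < g) (hf : g + dist b xt < c)
    (hvol : ∀ (p q : EuclideanSpace ℝ (Fin n)) (a : ℝ), dist p q ≤ a →
      volume (PHS p q a) =
        ENNReal.ofReal ((π ^ ((n : ℝ) / 2) / (2 ^ n * Real.Gamma ((n : ℝ) / 2 + 1))) *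
          a * ((a ^ 2 - dist p q ^ 2) ^ (((n : ℝ) - 1) / 2)))) :
    volume (PHS xs b g) + volume (PHS b xt (c - g)) ≤ volume (PHS xs xt c) := by
  set f1 := dist xs b with hf1
  set f2 := dist b xt with hf2
  set f3 := dist xs xt with hf3
  set K := π ^ ((n : ℝ) / 2) / (2 ^ n * Real.Gamma ((n : ℝ) / 2 + 1)) with hK
  set m := ((n : ℝ) - 1) / 2 with hm
  have hm0 : 0 ≤ m := by
    have : (1 : ℝ) ≤ (n : ℝ) := by exact_mod_cast hn
    rw [hm]; linarith
  have hf10 : 0 ≤ f1 := dist_nonneg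
  have hf20 : 0 ≤ f2 := dist_nonneg
  have hf30 : 0 ≤ f3 := dist_nonneg
  have htri : f3 ≤ f1 + f2 := dist_triangle xs b xt
  have hg0 : 0 ≤ g := le_of_lt (lt_of_le_of_lt hf10 hg)
  have hcg0 : 0 ≤ c - g := by linarith
  have hc0 : 0 ≤ c := by linarith
  have hK0 : 0 ≤ K := by
    rw [hK]
    apply div_nonneg (Real.rpow_nonneg (le_of_lt Real.pi_pos) _)
    have := Real.Gamma_pos_of_pos (show (0:ℝ) < (n : ℝ) / 2 + 1 by positivity)
    positivity
  have hA : g ^ 2 - f1 ^ 2 ≤ c ^ 2 - f3 ^ 2 := by nlinarith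
  have hB : (c - g) ^ 2 - f2 ^ 2 ≤ c ^ 2 - f3 ^ 2 := by nlinarith
  have hA0 : 0 ≤ g ^ 2 - f1 ^ 2 := by nlinarith
  have hB0 : 0 ≤ (c - g) ^ 2 - f2 ^ 2 := by nlinarith
  have h1 : (g ^ 2 - f1 ^ 2) ^ m ≤ (c ^ 2 - f3 ^ 2) ^ m :=
    Real.rpow_le_rpow hA0 hA hm0
  have h2 : ((c - g) ^ 2 - f2 ^ 2) ^ m ≤ (c ^ 2 - f3 ^ 2) ^ m :=
    Real.rpow_le_rpow hB0 hB hm0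
  have hApow : 0 ≤ (g ^ 2 - f1 ^ 2) ^ m := Real.rpow_nonneg hA0 _
  have hBpow : 0 ≤ ((c - g) ^ 2 - f2 ^ 2) ^ m := Real.rpow_nonneg hB0 _
  rw [hvol xs b g hg.le, hvol b xt (c - g) (by linarith), hvol xs xt c hc.le]
  rw [← ENNReal.ofReal_add (mul_nonneg (mul_nonneg hK0 hg0) hApow)
    (mul_nonneg (mul_nonneg hK0 hcg0) hBpow)]
  apply ENNReal.ofReal_le_ofReal
  have key : g * (g ^ 2 - f1 ^ 2) ^ m + (c - g) * ((c - g) ^ 2 - f2 ^ 2) ^ m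
      ≤ c * (c ^ 2 - f3 ^ 2) ^ m := by
    nlinarith [mul_nonneg hg0 (sub_nonneg.2 h1), mul_nonneg hcg0 (sub_nonneg.2 h2)]
  calc K * g * (g ^ 2 - f1 ^ 2) ^ m + K * (c - g) * ((c - g) ^ 2 - f2 ^ 2) ^ m
      = K * (g * (g ^ 2 - f1 ^ 2) ^ m + (c - g) * ((c - g) ^ 2 - f2 ^ 2) ^ m) := by ring
    _ ≤ K * (c * (c ^ 2 - f3 ^ 2) ^ m) := mul_le_mul_of_nonneg_left key hK0
    _ = K * c * (c ^ 2 - f3 ^ 2) ^ m := by ring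
end
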